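/- Let (Ω, 𝒜, 𝔾) and (U, ℬ, 𝕌) be probability spaces and let F ⊆ Ω × U be measurable with respect to the product σ-algebra 𝒜 ⊗ ℬ. Define P(ω) := 𝕌({u : (ω, u) ∈ F}), p(u) := 𝔾({ω : (ω, u) ∈ F}), and P̌ := ∫_U p(u) d𝕌(u). Then ∫_Ω |P(ω) − P̌| d𝔾(ω) ≤ 2 ∫_U p(u)(1 − p(u)) d𝕌(u). Consequently, for any α ∈ (0,1), setting γ̌ := (2/α) ∫_U p(u)(1 − p(u)) d𝕌(u), the interval [max(P̌ − γ̌, 0), min(P̌ + γ̌, 1)] contains P with 𝔾-probability at least 1 − α, i.e., 𝔾({ω : |P(ω) − P̌| > γ̌}) ≤ α. -/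

import Mathlib

open MeasureTheory Set

section aux
variable {Ω U : Type*} [MeasurableSpace Ω] [MeasurableSpace U]
    (G : Measure Ω) (Mu : Measure U)
    [IsProbabilityMeasure G] [IsProbabilityMeasure Mu]
    (F : Set (Ω × U))

private theorem aux_main (hF : MeasurableSet F) :
    (∫ ω, |(Mu {u | (ω, u) ∈ F}).toReal -
        ∫ u, (G {ω' | (ω', u) ∈ F}).toReal ∂Mu| ∂G) ≤
      2 * ∫ u, (G {ω' | (ω', u) ∈ F}).toReal * (1 - (G {ω' | (ω', u) ∈ F}).toReal) ∂Mu := by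
  set p : U → ℝ := fun u => (G {ω' | (ω', u) ∈ F}).toReal with hp_def
  set P : Ω → ℝ := fun ω => (Mu {u | (ω, u) ∈ F}).toReal with hP_def
  have hmp : Measurable p := (measurable_measure_prodMk_right hF).ennreal_toReal
  have hmP : Measurable P := (measurable_measure_prodMk_left hF).ennreal_toReal
  have hp0 : ∀ u, 0 ≤ p u := fun u => ENNReal.toReal_nonneg
  have hp1 : ∀ u, p u ≤ 1 := fun u => by
    simpa using ENNReal.toReal_mono ENNReal.one_ne_top prob_le_one
  have hint_p : Integrable p Mu :=
    ⟨hmp.aestronglyMeasurable, HasFiniteIntegral.of_bounded (C := 1)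
      (ae_of_all _ fun u => by rw [Real.norm_eq_abs, abs_of_nonneg (hp0 u)]; exact hp1 u)⟩
  -- the function f ω u = |1_F(ω,u) - p u|
  set f : Ω → U → ℝ := fun ω u => |F.indicator 1 (ω, u) - p u| with hf_def
  have hmf : Measurable (Function.uncurry f) := by
    apply Measurable.abs
    exact ((measurable_one.indicator hF).sub (hmp.comp measurable_snd))
  have hfb : ∀ ω u, |f ω u| ≤ 1 := by
    intro ω u
    have hfu : f ω u = |F.indicator 1 (ω, u) - p u| := rfl
    rw [hfu, abs_abs, abs_le]
    by_cases h : (ω, u) ∈ F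
    · rw [Set.indicator_of_mem h]; simp only [Pi.one_apply]
      constructor <;> nlinarith [hp0 u, hp1 u]
    · rw [Set.indicator_of_notMem h]
      constructor <;> nlinarith [hp0 u, hp1 u]
  have hint_f : Integrable (Function.uncurry f) (G.prod Mu) :=
    ⟨hmf.aestronglyMeasurable, HasFiniteIntegral.of_bounded (C := 1)
      (ae_of_all _ fun z => by rw [Real.norm_eq_abs]; exact hfb z.1 z.2)⟩
  -- step 1: |P ω - ∫ p| ≤ ∫ u, f ω u
  have h1 : ∀ ω, |P ω - ∫ u, p u ∂Mu| ≤ ∫ u, f ω u ∂Mu := by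
    intro ω
    have hsec : MeasurableSet {u | (ω, u) ∈ F} := hF.preimage (measurable_prodMk_left)
    have hind : (fun u => F.indicator (1 : Ω × U → ℝ) (ω, u)) =
        ({u | (ω, u) ∈ F}).indicator 1 := by
      funext u; by_cases h : (ω, u) ∈ F <;> simp [Set.indicator_apply, h]
    have hint_ind : Integrable (fun u => F.indicator (1 : Ω × U → ℝ) (ω, u)) Mu := by
      rw [hind]; exact (integrable_const (1:ℝ)).indicator hsec
    have hPω : P ω = ∫ u, F.indicator (1 : Ω × U → ℝ) (ω, u) ∂Mu := by
      rw [hind, integral_indicator_one hsec]; rfl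
    calc |P ω - ∫ u, p u ∂Mu|
        = |∫ u, (F.indicator (1 : Ω × U → ℝ) (ω, u) - p u) ∂Mu| := by
          rw [integral_sub hint_ind hint_p, ← hPω]
      _ ≤ ∫ u, f ω u ∂Mu := by
          simpa [hf_def, Real.norm_eq_abs] using
            norm_integral_le_integral_norm (fun u => F.indicator (1 : Ω × U → ℝ) (ω, u) - p u)
  -- step 3: inner integral over ω equals 2 p (1 - p)
  have h3 : ∀ u, ∫ ω, f ω u ∂G = 2 * p u * (1 - p u) := by
    intro u
    have hsec : MeasurableSet {ω' | (ω', u) ∈ F} := hF.preimage (measurable_prodMk_right)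
    have hptw : (fun ω => f ω u) =
        fun ω => ({ω' | (ω', u) ∈ F}).indicator (fun _ => 1 - 2 * p u) ω + p u := by
      funext ω
      by_cases h : (ω, u) ∈ F
      · simp [hf_def, Set.indicator_apply, h, abs_of_nonneg (sub_nonneg.2 (hp1 u))]; ring
      · simp [hf_def, Set.indicator_apply, h, abs_of_nonneg (hp0 u)]
    rw [hptw, integral_add ((integrable_const _).indicator hsec) (integrable_const _),
      integral_indicator_const _ hsec, integral_const]
    simp only [measureReal_def, measure_univ, ENNReal.toReal_one, smul_eq_mul, one_mul]
    have : (G {ω' | (ω', u) ∈ F}).toReal = p u := rfl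
    rw [this]; ring
  -- combine
  have hint_P : Integrable (fun ω => |P ω - ∫ u, p u ∂Mu|) G := by
    refine ⟨((hmP.sub measurable_const).abs).aestronglyMeasurable,
      HasFiniteIntegral.of_bounded (C := 2) (ae_of_all _ fun ω => ?_)⟩
    rw [Real.norm_eq_abs, abs_abs]
    have h01 : 0 ≤ ∫ u, p u ∂Mu := integral_nonneg hp0
    have h02 : (∫ u, p u ∂Mu) ≤ 1 := by
      calc (∫ u, p u ∂Mu) ≤ ∫ _u, (1:ℝ) ∂Mu := integral_mono hint_p (integrable_const 1) hp1
        _ = 1 := by simp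
    have hP0 : 0 ≤ P ω := ENNReal.toReal_nonneg
    have hP1 : P ω ≤ 1 := by simpa using ENNReal.toReal_mono ENNReal.one_ne_top prob_le_one
    rw [abs_le]; constructor <;> nlinarith
  have hint_If : Integrable (fun ω => ∫ u, f ω u ∂Mu) G := hint_f.integral_prod_left
  calc (∫ ω, |P ω - ∫ u, p u ∂Mu| ∂G)
      ≤ ∫ ω, ∫ u, f ω u ∂Mu ∂G := integral_mono hint_P hint_If h1
    _ = ∫ u, ∫ ω, f ω u ∂G ∂Mu := integral_integral_swap hint_f
    _ = ∫ u, 2 * p u * (1 - p u) ∂Mu := by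
        exact integral_congr_ae (ae_of_all _ fun u => h3 u)
    _ = 2 * ∫ u, p u * (1 - p u) ∂Mu := by
        rw [← integral_const_mul]; congr 1; funext u; ring


private theorem aux_int (hF : MeasurableSet F) :
    Integrable (fun ω => |(Mu {u | (ω, u) ∈ F}).toReal -
        ∫ u, (G {ω' | (ω', u) ∈ F}).toReal ∂Mu|) G := by
  set p : U → ℝ := fun u => (G {ω' | (ω', u) ∈ F}).toReal with hp_def
  set P : Ω → ℝ := fun ω => (Mu {u | (ω, u) ∈ F}).toReal with hP_def
  have hmp : Measurable p := (measurable_measure_prodMk_right hF).ennreal_toReal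
  have hmP : Measurable P := (measurable_measure_prodMk_left hF).ennreal_toReal
  have hp0 : ∀ u, 0 ≤ p u := fun u => ENNReal.toReal_nonneg
  have hp1 : ∀ u, p u ≤ 1 := fun u => by
    simpa using ENNReal.toReal_mono ENNReal.one_ne_top prob_le_one
  have hint_p : Integrable p Mu :=
    ⟨hmp.aestronglyMeasurable, HasFiniteIntegral.of_bounded (C := 1)
      (ae_of_all _ fun u => by rw [Real.norm_eq_abs, abs_of_nonneg (hp0 u)]; exact hp1 u)⟩
  refine ⟨((hmP.sub measurable_const).abs).aestronglyMeasurable,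
    HasFiniteIntegral.of_bounded (C := 2) (ae_of_all _ fun ω => ?_)⟩
  rw [Real.norm_eq_abs, abs_abs]
  have h01 : 0 ≤ ∫ u, p u ∂Mu := integral_nonneg hp0
  have h02 : (∫ u, p u ∂Mu) ≤ 1 := by
    calc (∫ u, p u ∂Mu) ≤ ∫ _u, (1:ℝ) ∂Mu := integral_mono hint_p (integrable_const 1) hp1
      _ = 1 := by simp
  have hP0 : 0 ≤ P ω := ENNReal.toReal_nonneg
  have hP1 : P ω ≤ 1 := by simpa using ENNReal.toReal_mono ENNReal.one_ne_top prob_le_one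
  rw [abs_le]; constructor <;> nlinarith

end aux

theorem stmt_16 {Ω U : Type*} [MeasurableSpace Ω] [MeasurableSpace U]
    (G : Measure Ω) (Mu : Measure U)
    [IsProbabilityMeasure G] [IsProbabilityMeasure Mu]
    (F : Set (Ω × U)) (hF : MeasurableSet F) :
    ((∫ ω, |(Mu {u | (ω, u) ∈ F}).toReal -
        ∫ u, (G {ω' | (ω', u) ∈ F}).toReal ∂Mu| ∂G) ≤
      2 * ∫ u, (G {ω' | (ω', u) ∈ F}).toReal * (1 - (G {ω' | (ω', u) ∈ F}).toReal) ∂Mu) ∧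
    (∀ a : ℝ, 0 < a → a < 1 →
      (G {ω | 2 / a *
          (∫ u, (G {ω' | (ω', u) ∈ F}).toReal * (1 - (G {ω' | (ω', u) ∈ F}).toReal) ∂Mu) <
          |(Mu {u | (ω, u) ∈ F}).toReal -
            ∫ u, (G {ω' | (ω', u) ∈ F}).toReal ∂Mu|}).toReal ≤ a) := by
  have hmain := aux_main G Mu F hF
  have hint := aux_int G Mu F hF
  refine ⟨hmain, fun a ha0 ha1 => ?_⟩
  set p : U → ℝ := fun u => (G {ω' | (ω', u) ∈ F}).toReal with hp_def
  set P : Ω → ℝ := fun ω => (Mu {u | (ω, u) ∈ F}).toReal with hP_def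
  set Pc : ℝ := ∫ u, p u ∂Mu with hPc_def
  set I : ℝ := ∫ u, p u * (1 - p u) ∂Mu with hI_def
  have hI0 : 0 ≤ I := integral_nonneg fun u => mul_nonneg ENNReal.toReal_nonneg
    (sub_nonneg.2 (by simpa using ENNReal.toReal_mono ENNReal.one_ne_top prob_le_one))
  have hnn : 0 ≤ᵐ[G] fun ω => |P ω - Pc| := ae_of_all _ fun ω => abs_nonneg _
  rcases eq_or_lt_of_le hI0 with h0 | hpos
  · -- I = 0 : the integral of |P - Pc| is zero, hence |P - Pc| = 0 a.e.
    have hle : (∫ ω, |P ω - Pc| ∂G) ≤ 0 := by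
      calc (∫ ω, |P ω - Pc| ∂G) ≤ 2 * I := hmain
        _ = 0 := by rw [← h0]; ring
    have hz : (∫ ω, |P ω - Pc| ∂G) = 0 :=
      le_antisymm hle (integral_nonneg fun ω => abs_nonneg _)
    have hae : (fun ω => |P ω - Pc|) =ᵐ[G] 0 :=
      (integral_eq_zero_iff_of_nonneg_ae hnn hint).1 hz
    have hnull : G {ω | 2 / a * I < |P ω - Pc|} = 0 := by
      have hnm : ∀ᵐ ω ∂G, ω ∉ {ω | 2 / a * I < |P ω - Pc|} := by
        filter_upwards [hae] with ω hω
        simp only [Set.mem_setOf_eq, not_lt]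
        have hz' : |P ω - Pc| = 0 := hω
        rw [hz', ← h0]
        simp
      exact measure_eq_zero_iff_ae_notMem.2 hnm
    rw [hnull]; simpa using ha0.le
  · -- I > 0 : Markov's inequality
    set ε : ℝ := 2 / a * I with hε_def
    have hε0 : 0 < ε := mul_pos (by positivity) hpos
    have hmarkov : ε * (G {ω | ε ≤ |P ω - Pc|}).toReal ≤ ∫ ω, |P ω - Pc| ∂G :=
      mul_meas_ge_le_integral_of_nonneg hnn hint ε
    have hsub : G {ω | ε < |P ω - Pc|} ≤ G {ω | ε ≤ |P ω - Pc|} :=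
      measure_mono (Set.setOf_subset_setOf.2 fun ω h => h.le)
    have hfin : G {ω | ε ≤ |P ω - Pc|} ≠ ⊤ := measure_ne_top _ _
    have h1 : (G {ω | ε < |P ω - Pc|}).toReal ≤ (G {ω | ε ≤ |P ω - Pc|}).toReal :=
      ENNReal.toReal_mono hfin hsub
    have h2 : ε * (G {ω | ε ≤ |P ω - Pc|}).toReal ≤ 2 * I := hmarkov.trans hmain
    have h3 : (G {ω | ε ≤ |P ω - Pc|}).toReal ≤ a := by
      by_contra hcon
      push_neg at hcon
      have heq : ε * a = 2 * I := by rw [hε_def]; field_simp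
      have hgt : ε * a < ε * (G {ω | ε ≤ |P ω - Pc|}).toReal :=
        mul_lt_mul_of_pos_left hcon hε0
      linarith
    exact h1.trans h3
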